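/- (Theorem 7(A)) Let 2 ≤ k and let P and N be disjoint finite sets of edges (unordered pairs of distinct elements of Fin n). If the term T_{P,N} is an implicant of the k-clique function f_{n,k}, then the term involves at least C(k,2) = k(k−1)/2 variables, i.e., the cardinality of P ∪ N is at least k(k−1)/2. -/

import Mathlib

abbrev Edge (n : ℕ) := {e : Sym2 (Fin n) // ¬ e.IsDiag}

def cliqueFun (n k : ℕ) (x : Edge n → Bool) : Bool :=
  decide (∃ S : Finset (Fin n), S.card = k ∧
    ∀ e : Edge n, (e : Sym2 (Fin n)) ∈ S.sym2 → x e = true)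

def edgesIn (n : ℕ) (S : Finset (Fin n)) : Finset (Edge n) :=
  Finset.univ.filter (fun e => (e : Sym2 (Fin n)) ∈ S.sym2)

def cliqueRestrict (n k : ℕ) (X : Finset (Edge n)) (x : {e : Edge n // e ∈ X} → Bool) : Bool :=
  cliqueFun n k (fun e => if h : e ∈ X then x ⟨e, h⟩ else false)

def edgePerm {n : ℕ} (σ : Equiv.Perm (Fin n)) : Equiv.Perm (Edge n) where
  toFun e := ⟨Sym2.map σ e.1, fun h => e.2 ((Sym2.isDiag_map σ.injective).mp h)⟩
  invFun e := ⟨Sym2.map σ.symm e.1, fun h => e.2 ((Sym2.isDiag_map σ.symm.injective).mp h)⟩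
  left_inv e := Subtype.ext (by simp [Sym2.map_map])
  right_inv e := Subtype.ext (by simp [Sym2.map_map])

lemma sym2_filter_not_isDiag_card {α : Type*} [DecidableEq α] (s : Finset α) :
    (s.sym2.filter fun e => ¬ e.IsDiag).card = s.card.choose 2 := by
  have hdiag : (s.sym2.filter fun e => e.IsDiag) = s.image Sym2.diag := by
    ext e
    simp only [Finset.mem_filter, Finset.mem_image, Finset.mem_sym2_iff]
    constructor
    · rintro ⟨hmem, hd⟩
      obtain ⟨a, rfl⟩ := (show e ∈ Set.range Sym2.diag by rw [Sym2.range_diag]; exact hd)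
      exact ⟨a, hmem a (by simp [Sym2.diag]), rfl⟩
    · rintro ⟨a, ha, rfl⟩
      refine ⟨fun y hy => ?_, Sym2.diag_isDiag a⟩
      simp only [Sym2.diag, Sym2.mem_iff, or_self] at hy; subst hy; exact ha
  have hsum := Finset.card_filter_add_card_filter_not
    (s := s.sym2) (p := fun e => e.IsDiag)
  rw [hdiag, Finset.card_image_of_injective _ Sym2.diag_injective, Finset.card_sym2] at hsum
  have : (s.card + 1).choose 2 = s.card.choose 2 + s.card := by
    rw [Nat.choose_succ_succ]; simp [Nat.add_comm]
  omega

theorem implicant_card_lower_bound (n k : ℕ) (hk : 2 ≤ k)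
    (P N : Finset (Edge n)) (hPN : Disjoint P N)
    (himp : ∀ x : Edge n → Bool,
      ((∀ e ∈ P, x e = true) ∧ (∀ e ∈ N, x e = false)) → cliqueFun n k x = true) :
    k * (k - 1) / 2 ≤ (P ∪ N).card := by
  have h := himp (fun e => decide (e ∈ P)) ⟨fun e he => by simp [he],
    fun e he => by simp [Finset.disjoint_right.mp hPN he]⟩
  rw [cliqueFun, decide_eq_true_eq] at h
  obtain ⟨S, hScard, hS⟩ := h
  have hsub : (S.sym2.filter fun e => ¬ e.IsDiag) ⊆ P.image Subtype.val := by
    intro e he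
    rw [Finset.mem_filter] at he
    have := hS ⟨e, he.2⟩ he.1
    simp only [decide_eq_true_eq] at this
    exact Finset.mem_image.mpr ⟨⟨e, he.2⟩, this, rfl⟩
  have hcard := Finset.card_le_card hsub
  rw [sym2_filter_not_isDiag_card, hScard,
    Finset.card_image_of_injective _ Subtype.val_injective] at hcard
  calc k * (k-1) / 2 = k.choose 2 := (Nat.choose_two_right k).symm
    _ ≤ P.card := hcard
    _ ≤ (P ∪ N).card := Finset.card_le_card Finset.subset_union_left
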